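/- Let t₀ ∈ ℝ, let w : ℝ → ℝ be differentiable on [t₀, ∞), and let α : ℝ → ℝ be continuous, strictly increasing, with α(0) = 0. Suppose w'(t) + α(w(t)) ≥ 0 for all t ≥ t₀, w(t₀) < 0, and w(t) < 0 for all t ≥ t₀. Then w is nondecreasing on [t₀, ∞) and w(t) → 0 as t → ∞. -/

import Mathlib

/-- Lyapunov property when the specification is initially violated: if
`w' t + α (w t) ≥ 0` on `[t₀, ∞)` with `α` continuous, strictly increasing and
`α 0 = 0`, while `w t₀ < 0` and `w t < 0` for all `t ≥ t₀`, then `w` is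
nondecreasing on `[t₀, ∞)` and `w t → 0` as `t → ∞`. -/
theorem violation_monotone_convergence
    (t₀ : ℝ) (w : ℝ → ℝ) (hw : DifferentiableOn ℝ w (Set.Ici t₀))
    (α : ℝ → ℝ) (hα_cont : Continuous α) (hα_mono : StrictMono α) (hα0 : α 0 = 0)
    (hineq : ∀ t, t₀ ≤ t → 0 ≤ derivWithin w (Set.Ici t₀) t + α (w t))
    (h0 : w t₀ < 0) (hneg : ∀ t, t₀ ≤ t → w t < 0) :
    MonotoneOn w (Set.Ici t₀) ∧ Filter.Tendsto w Filter.atTop (nhds 0) := by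
  have hderiv_eq : ∀ t ∈ Set.Ioi t₀, derivWithin w (Set.Ici t₀) t = deriv w t := by
    intro t ht
    exact derivWithin_of_mem_nhds (Ici_mem_nhds ht)
  have hαneg : ∀ t, t₀ ≤ t → α (w t) < 0 := by
    intro t ht
    have := hα_mono (hneg t ht)
    rwa [hα0] at this
  have hderiv_lb : ∀ t, t₀ ≤ t → -α (w t) ≤ derivWithin w (Set.Ici t₀) t := by
    intro t ht; linarith [hineq t ht]
  have hpos : ∀ t ∈ Set.Ioi t₀, 0 < deriv w t := by
    intro t ht
    rw [← hderiv_eq t ht]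
    have h1 := hderiv_lb t (le_of_lt ht)
    have h2 := hαneg t (le_of_lt ht)
    linarith
  have hmono : StrictMonoOn w (Set.Ici t₀) := by
    apply strictMonoOn_of_deriv_pos (convex_Ici t₀) hw.continuousOn
    rwa [interior_Ici]
  refine ⟨hmono.monotoneOn, ?_⟩
  -- global monotone extension
  set g : ℝ → ℝ := fun t => w (max t t₀) with hg
  have hg_mono : Monotone g := by
    intro s t hst
    exact hmono.monotoneOn (le_max_right s t₀) (le_max_right t t₀)
      (max_le_max hst le_rfl)
  have hg_neg : ∀ t, g t < 0 := fun t => hneg _ (le_max_right t t₀)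
  have hg_bdd : BddAbove (Set.range g) := by
    refine ⟨0, ?_⟩
    rintro _ ⟨t, rfl⟩
    exact (hg_neg t).le
  have hg_tendsto : Filter.Tendsto g Filter.atTop (nhds (⨆ t, g t)) :=
    tendsto_atTop_ciSup hg_mono hg_bdd
  set L : ℝ := ⨆ t, g t with hL
  have hw_eq_g : w =ᶠ[Filter.atTop] g := by
    filter_upwards [Filter.eventually_ge_atTop t₀] with t ht
    simp [hg, max_eq_left ht]
  have hL_le : L ≤ 0 := ciSup_le fun t => (hg_neg t).le
  have hwL : ∀ t, t₀ ≤ t → w t ≤ L := by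
    intro t ht
    have : g t ≤ L := le_ciSup hg_bdd t
    simpa [hg, max_eq_left ht] using this
  have hL0 : L = 0 := by
    by_contra hne
    have hLneg : L < 0 := lt_of_le_of_ne hL_le hne
    have hαL : α L < 0 := by have := hα_mono hLneg; rwa [hα0] at this
    set c : ℝ := -α L with hc
    have hcpos : 0 < c := by simp [hc]; linarith
    have hderiv_c : ∀ t ∈ interior (Set.Ici t₀), c ≤ deriv w t := by
      rw [interior_Ici]
      intro t ht
      rw [← hderiv_eq t ht]
      have h1 := hderiv_lb t (le_of_lt ht)
      have h2 : α (w t) ≤ α L := hα_mono.monotone (hwL t (le_of_lt ht))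
      have : -α L ≤ -α (w t) := by linarith
      linarith
    -- mean value inequality
    have hdiff : DifferentiableOn ℝ w (interior (Set.Ici t₀)) := by
      rw [interior_Ici]
      exact fun x hx =>
        ((hw x (Set.mem_Ici.mpr (le_of_lt hx))).differentiableAt (Ici_mem_nhds hx)).differentiableWithinAt
    have hkey := (convex_Ici t₀).mul_sub_le_image_sub_of_le_deriv
      hw.continuousOn hdiff hderiv_c
    set T : ℝ := t₀ + (1 - w t₀) / c with hT
    have hT_ge : t₀ ≤ T := by
      rw [hT]
      have : 0 < (1 - w t₀) / c := div_pos (by linarith) hcpos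
      linarith
    have hmain := hkey t₀ Set.self_mem_Ici T hT_ge hT_ge
    have hTm : c * (T - t₀) = 1 - w t₀ := by
      rw [hT]; field_simp; ring
    rw [hTm] at hmain
    have := hneg T hT_ge
    linarith
  have hfin := hg_tendsto.congr' hw_eq_g.symm
  rwa [hL0] at hfin
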